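/- (Lemma 1(b)) Let V : [0,L] → ℝ be twice continuously differentiable and satisfy λ²·V''(s) = V(s) + b·g(V(s)) for all s ∈ [0,L], with V(0) > 0 and V(L) < 0. Set λ̂₁ = λ/√(1+b) and λ̂₂ = λ. Then there exist a point s₁ ∈ (0,L) with V(s₁) = 0 and constants k₁, k₂, p₁, p₂ ∈ ℝ such that V(s) = k₁·exp(s/λ̂₁) + k₂·exp(−s/λ̂₁) for all s ∈ [0,s₁], V(s) = p₁·exp(s/λ̂₂) + p₂·exp(−s/λ̂₂) for all s ∈ [s₁,L], and the two pieces have matching first derivatives at s₁, i.e., (k₁/λ̂₁)·exp(s₁/λ̂₁) − (k₂/λ̂₁)·exp(−s₁/λ̂₁) = (p₁/λ̂₂)·exp(s₁/λ̂₂) − (p₂/λ̂₂)·exp(−s₁/λ̂₂). -/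

import Mathlib

open Set Filter Topology

open Set Filter Topology

private lemma boundary_nonneg_right {f : ℝ → ℝ} {a b : ℝ} (hab : a < b)
    (hf : ContinuousWithinAt f (Ico a b) b) (h : ∀ s ∈ Ico a b, 0 ≤ f s) : 0 ≤ f b := by
  haveI hne : (𝓝[Ico a b] b).NeBot := by
    rw [← mem_closure_iff_nhdsWithin_neBot, closure_Ico hab.ne]
    exact right_mem_Icc.2 hab.le
  exact ge_of_tendsto hf (eventually_nhdsWithin_of_forall h)

private lemma boundary_nonneg_left {f : ℝ → ℝ} {a b : ℝ} (hab : a < b)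
    (hf : ContinuousWithinAt f (Ioc a b) a) (h : ∀ s ∈ Ioc a b, 0 ≤ f s) : 0 ≤ f a := by
  haveI hne : (𝓝[Ioc a b] a).NeBot := by
    rw [← mem_closure_iff_nhdsWithin_neBot, closure_Ioc hab.ne]
    exact left_mem_Icc.2 hab.le
  exact ge_of_tendsto hf (eventually_nhdsWithin_of_forall h)

private lemma exp_rep {a e lamh : ℝ} (h0 : 0 < lamh) {V V' V'' : ℝ → ℝ}
    (hV : ∀ s ∈ Icc a e, HasDerivWithinAt V (V' s) (Icc a e) s)
    (hV' : ∀ s ∈ Icc a e, HasDerivWithinAt V' (V'' s) (Icc a e) s)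
    (hODE : ∀ s ∈ Icc a e, lamh ^ 2 * V'' s = V s) :
    ∃ k₁ k₂ : ℝ,
      (∀ s ∈ Icc a e, V s = k₁ * Real.exp (s / lamh) + k₂ * Real.exp (-(s / lamh))) ∧
      (∀ s ∈ Icc a e, V' s = k₁ / lamh * Real.exp (s / lamh)
          - k₂ / lamh * Real.exp (-(s / lamh))) := by
  have hlne : lamh ≠ 0 := h0.ne'
  have hexpneg : ∀ x : ℝ, HasDerivAt (fun s : ℝ => Real.exp (-(s / lamh)))
      (Real.exp (-(x / lamh)) * -(1 / lamh)) x := fun x =>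
    (((hasDerivAt_id x).div_const lamh).neg).exp
  have hexp : ∀ x : ℝ, HasDerivAt (fun s : ℝ => Real.exp (s / lamh))
      (Real.exp (x / lamh) * (1 / lamh)) x := fun x =>
    ((hasDerivAt_id x).div_const lamh).exp
  have hF : ∀ x ∈ Icc a e,
      HasDerivWithinAt (fun s => (V' s + V s / lamh) * Real.exp (-(s / lamh))) 0 (Icc a e) x := by
    intro x hx
    have h2 : V'' x = V x / lamh ^ 2 := by
      have hode := hODE x hx; field_simp; linarith
    have h1 := ((hV' x hx).add ((hV x hx).div_const lamh)).mul
      ((hexpneg x).hasDerivWithinAt (s := Icc a e))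
    refine h1.congr_deriv ?_
    rw [h2]; simp only [Pi.add_apply]; ring
  have hG : ∀ x ∈ Icc a e,
      HasDerivWithinAt (fun s => (V' s - V s / lamh) * Real.exp (s / lamh)) 0 (Icc a e) x := by
    intro x hx
    have h2 : V'' x = V x / lamh ^ 2 := by
      have hode := hODE x hx; field_simp; linarith
    have h1 := ((hV' x hx).sub ((hV x hx).div_const lamh)).mul
      ((hexp x).hasDerivWithinAt (s := Icc a e))
    refine h1.congr_deriv ?_
    rw [h2]; simp only [Pi.sub_apply]; ring
  have hFc : ∀ x ∈ Icc a e, (V' x + V x / lamh) * Real.exp (-(x / lamh))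
      = (V' a + V a / lamh) * Real.exp (-(a / lamh)) :=
    constant_of_has_deriv_right_zero (fun x hx => (hF x hx).continuousWithinAt)
      (fun x hx => (hF x (Ico_subset_Icc_self hx)).mono_of_mem_nhdsWithin (Icc_mem_nhdsGE_of_mem hx))
  have hGc : ∀ x ∈ Icc a e, (V' x - V x / lamh) * Real.exp (x / lamh)
      = (V' a - V a / lamh) * Real.exp (a / lamh) :=
    constant_of_has_deriv_right_zero (fun x hx => (hG x hx).continuousWithinAt)
      (fun x hx => (hG x (Ico_subset_Icc_self hx)).mono_of_mem_nhdsWithin (Icc_mem_nhdsGE_of_mem hx))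
  obtain ⟨A, hA0⟩ : ∃ A : ℝ, (V' a + V a / lamh) * Real.exp (-(a / lamh)) = A := ⟨_, rfl⟩
  obtain ⟨B, hB0⟩ : ∃ B : ℝ, (V' a - V a / lamh) * Real.exp (a / lamh) = B := ⟨_, rfl⟩
  rw [hA0] at hFc; rw [hB0] at hGc
  have key : ∀ s ∈ Icc a e, V' s + V s / lamh = A * Real.exp (s / lamh)
      ∧ V' s - V s / lamh = B * Real.exp (-(s / lamh)) := by
    intro s hs
    have hFs := hFc s hs
    have hGs := hGc s hs
    have hEE : Real.exp (s / lamh) * Real.exp (-(s / lamh)) = 1 := by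
      rw [← Real.exp_add]; ring_nf; exact Real.exp_zero
    constructor
    · linear_combination Real.exp (s / lamh) * hFs - (V' s + V s / lamh) * hEE
    · linear_combination Real.exp (-(s / lamh)) * hGs - (V' s - V s / lamh) * hEE
  refine ⟨lamh * A / 2, -(lamh * B / 2), ?_, ?_⟩ <;> intro s hs <;>
    obtain ⟨hA, hB⟩ := key s hs <;>
    rw [Real.exp_neg] at hB ⊢ <;>
    field_simp at hA hB ⊢
  · linear_combination Real.exp (s / lamh) * hA - hB
  · linear_combination (norm := skip) (Real.exp (s / lamh) * hA + hB) / lamh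
    field_simp
    ring


/-- Lemma 1(b): if `V(0) > 0` and `V(L) < 0`, then the solution of the cable
equilibrium equation `λ² V''(s) = V(s) + b·max(V(s), 0)` crosses zero at some
`s₁ ∈ (0, L)` and is a two-piece combination of exponentials: with
`λ̂₁ = λ/√(1+b)` on `[0, s₁]` and `λ̂₂ = λ` on `[s₁, L]`, the two pieces having
matching first derivatives at `s₁`. -/
theorem cable_equilibrium_opposite_sign_boundary
    (lam L b : ℝ) (hlam : 0 < lam) (hL : 0 < L) (hb : 0 ≤ b)
    (V V' V'' : ℝ → ℝ)
    (hV : ∀ s ∈ Icc 0 L, HasDerivWithinAt V (V' s) (Icc 0 L) s)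
    (hV' : ∀ s ∈ Icc 0 L, HasDerivWithinAt V' (V'' s) (Icc 0 L) s)
    (hV''cont : ContinuousOn V'' (Icc 0 L))
    (hODE : ∀ s ∈ Icc 0 L, lam ^ 2 * V'' s = V s + b * max (V s) 0)
    (h0 : 0 < V 0) (hLval : V L < 0)
    (lamhat₁ lamhat₂ : ℝ)
    (hlamhat₁ : lamhat₁ = lam / Real.sqrt (1 + b)) (hlamhat₂ : lamhat₂ = lam) :
    ∃ s₁ ∈ Ioo 0 L, V s₁ = 0 ∧
      ∃ k₁ k₂ p₁ p₂ : ℝ,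
        (∀ s ∈ Icc 0 s₁,
          V s = k₁ * Real.exp (s / lamhat₁) + k₂ * Real.exp (-(s / lamhat₁))) ∧
        (∀ s ∈ Icc s₁ L,
          V s = p₁ * Real.exp (s / lamhat₂) + p₂ * Real.exp (-(s / lamhat₂))) ∧
        (k₁ / lamhat₁) * Real.exp (s₁ / lamhat₁) -
            (k₂ / lamhat₁) * Real.exp (-(s₁ / lamhat₁)) =
          (p₁ / lamhat₂) * Real.exp (s₁ / lamhat₂) -
            (p₂ / lamhat₂) * Real.exp (-(s₁ / lamhat₂)) := by
  have hVcont : ContinuousOn V (Icc 0 L) := fun s hs => (hV s hs).continuousWithinAt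
  have hV'cont : ContinuousOn V' (Icc 0 L) := fun s hs => (hV' s hs).continuousWithinAt
  have hb1 : (0:ℝ) < 1 + b := by linarith
  have hlh1 : 0 < lamhat₁ := by
    rw [hlamhat₁]; exact div_pos hlam (Real.sqrt_pos.2 hb1)
  have hlh2 : 0 < lamhat₂ := hlamhat₂ ▸ hlam
  -- the first zero s₁
  set S : Set ℝ := {s | s ∈ Icc 0 L ∧ V s ≤ 0} with hSdef
  have hSL : L ∈ S := ⟨right_mem_Icc.2 hL.le, hLval.le⟩
  have hSclosed : IsClosed S := by
    have : S = Icc 0 L ∩ V ⁻¹' Iic 0 := by ext x; simp [hSdef, And.comm]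
    rw [this]
    exact hVcont.preimage_isClosed_of_isClosed isClosed_Icc isClosed_Iic
  have hSbdd : BddBelow S := ⟨0, fun x hx => hx.1.1⟩
  set s₁ := sInf S with hs₁def
  have hs₁S : s₁ ∈ S := hSclosed.csInf_mem ⟨L, hSL⟩ hSbdd
  have hs₁mem : s₁ ∈ Icc 0 L := hs₁S.1
  have hs₁L : s₁ ≤ L := hs₁mem.2
  have hpos : ∀ s ∈ Ico 0 s₁, 0 < V s := by
    intro s hs
    by_contra h; push_neg at h
    exact absurd (csInf_le hSbdd ⟨⟨hs.1, hs.2.le.trans hs₁L⟩, h⟩) (not_le.2 hs.2)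
  have hs₁pos : 0 < s₁ := by
    rcases lt_or_eq_of_le hs₁mem.1 with h | h
    · exact h
    · exfalso; rw [← h] at hs₁S; linarith [hs₁S.2]
  have hVs₁ : V s₁ = 0 := by
    refine le_antisymm hs₁S.2 ?_
    refine boundary_nonneg_right hs₁pos ((hVcont s₁ hs₁mem).mono ?_) fun s hs => (hpos s hs).le
    exact fun x hx => ⟨hx.1, hx.2.le.trans hs₁L⟩
  have hs₁ltL : s₁ < L := by
    rcases lt_or_eq_of_le hs₁L with h | h
    · exact h
    · exfalso; rw [h] at hVs₁; linarith
  have hVnonneg : ∀ s ∈ Icc 0 s₁, 0 ≤ V s := by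
    intro s hs
    rcases lt_or_eq_of_le hs.2 with h | h
    · exact (hpos s ⟨hs.1, h⟩).le
    · rw [h, hVs₁]
  -- V is nonpositive on [s₁, L]
  have hVnonpos : ∀ s ∈ Icc s₁ L, V s ≤ 0 := by
    by_contra h; push_neg at h
    obtain ⟨t, ht, htpos⟩ := h
    have ht0L : t ∈ Icc (0:ℝ) L := ⟨hs₁pos.le.trans ht.1, ht.2⟩
    -- last zero before t
    set Sa : Set ℝ := {s | s ∈ Icc s₁ t ∧ V s ≤ 0} with hSadef
    have hSas₁ : s₁ ∈ Sa := ⟨left_mem_Icc.2 ht.1, hVs₁.le⟩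
    have hSaclosed : IsClosed Sa := by
      have : Sa = Icc s₁ t ∩ V ⁻¹' Iic 0 := by ext x; simp [hSadef, And.comm]
      rw [this]
      refine (hVcont.mono ?_).preimage_isClosed_of_isClosed isClosed_Icc isClosed_Iic
      exact fun x hx => ⟨hs₁pos.le.trans hx.1, hx.2.trans ht.2⟩
    have hSabdd : BddAbove Sa := ⟨t, fun x hx => hx.1.2⟩
    set a := sSup Sa with hadef
    have haS : a ∈ Sa := hSaclosed.csSup_mem ⟨s₁, hSas₁⟩ hSabdd
    have ha0 : 0 < a := lt_of_lt_of_le hs₁pos haS.1.1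
    have hat : a ≤ t := haS.1.2
    have hposa : ∀ s ∈ Ioc a t, 0 < V s := by
      intro s hs
      by_contra hc; push_neg at hc
      exact absurd (le_csSup hSabdd ⟨⟨haS.1.1.trans hs.1.le, hs.2⟩, hc⟩) (not_le.2 hs.1)
    have halt : a < t := by
      rcases lt_or_eq_of_le hat with h | h
      · exact h
      · exfalso; rw [h] at haS; linarith [haS.2]
    have hVa : V a = 0 := by
      refine le_antisymm haS.2 ?_
      refine boundary_nonneg_left halt ((hVcont a ⟨ha0.le, haS.1.2.trans ht.2⟩).mono ?_)
        fun s hs => (hposa s hs).le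
      exact fun x hx => ⟨ha0.le.trans hx.1.le, hx.2.trans ht.2⟩
    -- first zero after t
    set Sc : Set ℝ := {s | s ∈ Icc t L ∧ V s ≤ 0} with hScdef
    have hScL : L ∈ Sc := ⟨right_mem_Icc.2 ht.2, hLval.le⟩
    have hScclosed : IsClosed Sc := by
      have : Sc = Icc t L ∩ V ⁻¹' Iic 0 := by ext x; simp [hScdef, And.comm]
      rw [this]
      refine (hVcont.mono ?_).preimage_isClosed_of_isClosed isClosed_Icc isClosed_Iic
      exact fun x hx => ⟨ht0L.1.trans hx.1, hx.2⟩
    have hScbdd : BddBelow Sc := ⟨t, fun x hx => hx.1.1⟩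
    set c := sInf Sc with hcdef
    have hcS : c ∈ Sc := hScclosed.csInf_mem ⟨L, hScL⟩ hScbdd
    have htc : t ≤ c := hcS.1.1
    have hcL : c ≤ L := hcS.1.2
    have hposc : ∀ s ∈ Ico t c, 0 < V s := by
      intro s hs
      by_contra hc'; push_neg at hc'
      exact absurd (csInf_le hScbdd ⟨⟨hs.1, (hs.2.le.trans hcL)⟩, hc'⟩) (not_le.2 hs.2)
    have htltc : t < c := by
      rcases lt_or_eq_of_le htc with h | h
      · exact h
      · exfalso; rw [← h] at hcS; linarith [hcS.2]
    have hVc : V c = 0 := by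
      refine le_antisymm hcS.2 ?_
      refine boundary_nonneg_right htltc ((hVcont c ⟨ht0L.1.trans htc, hcL⟩).mono ?_)
        fun s hs => (hposc s hs).le
      exact fun x hx => ⟨ht0L.1.trans hx.1, hx.2.le.trans hcL⟩
    -- V ≥ 0 on [a, c]
    have hVnonnegac : ∀ s ∈ Icc a c, 0 ≤ V s := by
      intro s hs
      rcases le_or_gt s t with h1 | h1
      · rcases lt_or_eq_of_le hs.1 with h2 | h2
        · exact (hposa s ⟨h2, h1⟩).le
        · rw [← h2, hVa]
      · rcases lt_or_eq_of_le hs.2 with h2 | h2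
        · exact (hposc s ⟨h1.le, h2⟩).le
        · rw [h2, hVc]
    have hsubIcc : Icc a c ⊆ Icc 0 L := fun x hx =>
      ⟨ha0.le.trans hx.1, hx.2.trans hcL⟩
    have hsubIoo : Ioo a c ⊆ Ioo 0 L := fun x hx =>
      ⟨ha0.trans hx.1, hx.2.trans_le hcL⟩
    -- V' is monotone on [a, c]
    have hmono : MonotoneOn V' (Icc a c) := by
      have hderiv : ∀ x ∈ Ioo a c, HasDerivAt V' (V'' x) x := by
        intro x hx
        have hx' := hsubIoo hx
        exact (hV' x (Ioo_subset_Icc_self hx')).hasDerivAt (Icc_mem_nhds hx'.1 hx'.2)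
      refine monotoneOn_of_deriv_nonneg (convex_Icc a c) (hV'cont.mono hsubIcc) ?_ ?_
      · rw [interior_Icc]
        exact fun x hx => ((hderiv x hx).differentiableAt).differentiableWithinAt
      · rw [interior_Icc]
        intro x hx
        rw [(hderiv x hx).deriv]
        have hode := hODE x (Ioo_subset_Icc_self (hsubIoo hx))
        have h1 : 0 ≤ V x := hVnonnegac x (Ioo_subset_Icc_self hx)
        nlinarith [pow_pos hlam 2, mul_nonneg hb (le_max_right (V x) 0)]
    -- MVT on [a, t] and [t, c]
    obtain ⟨ξ₁, hξ₁, hd1⟩ := exists_hasDerivAt_eq_slope V V' halt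
      (hVcont.mono fun x hx => hsubIcc ⟨hx.1, hx.2.trans htltc.le⟩)
      (fun x hx => (hV x (hsubIcc (Ioo_subset_Icc_self ⟨hx.1, hx.2.trans htltc⟩))).hasDerivAt
        (Icc_mem_nhds (hsubIoo ⟨hx.1, hx.2.trans htltc⟩).1 (hsubIoo ⟨hx.1, hx.2.trans htltc⟩).2))
    obtain ⟨ξ₂, hξ₂, hd2⟩ := exists_hasDerivAt_eq_slope V V' htltc
      (hVcont.mono fun x hx => hsubIcc ⟨halt.le.trans hx.1, hx.2⟩)
      (fun x hx => (hV x (hsubIcc (Ioo_subset_Icc_self ⟨halt.trans hx.1, hx.2⟩))).hasDerivAt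
        (Icc_mem_nhds (hsubIoo ⟨halt.trans hx.1, hx.2⟩).1 (hsubIoo ⟨halt.trans hx.1, hx.2⟩).2))
    have hp1 : 0 < V' ξ₁ := by
      rw [hd1, hVa]
      exact div_pos (by linarith) (by linarith)
    have hp2 : V' ξ₂ < 0 := by
      rw [hd2, hVc]
      exact div_neg_of_neg_of_pos (by linarith) (by linarith)
    have hle : V' ξ₁ ≤ V' ξ₂ :=
      hmono ⟨hξ₁.1.le, hξ₁.2.le.trans htltc.le⟩ ⟨halt.le.trans hξ₂.1.le, hξ₂.2.le⟩
        (hξ₁.2.le.trans hξ₂.1.le)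
    linarith
  -- representation on [0, s₁]
  have hsubL : Icc (0:ℝ) s₁ ⊆ Icc 0 L := fun x hx => ⟨hx.1, hx.2.trans hs₁L⟩
  have hsubR : Icc s₁ L ⊆ Icc (0:ℝ) L := fun x hx => ⟨hs₁pos.le.trans hx.1, hx.2⟩
  have hlamhat₁sq : lamhat₁ ^ 2 = lam ^ 2 / (1 + b) := by
    rw [hlamhat₁, div_pow, Real.sq_sqrt hb1.le]
  obtain ⟨k₁, k₂, hk, hk'⟩ := exp_rep (V := V) (V' := V') (V'' := V'') hlh1
    (fun s hs => (hV s (hsubL hs)).mono hsubL)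
    (fun s hs => (hV' s (hsubL hs)).mono hsubL)
    (by
      intro s hs
      have hode := hODE s (hsubL hs)
      have hmax : max (V s) 0 = V s := max_eq_left (hVnonneg s hs)
      rw [hmax] at hode
      rw [hlamhat₁sq]
      field_simp
      linarith [hode])
  obtain ⟨p₁, p₂, hp, hp'⟩ := exp_rep (V := V) (V' := V') (V'' := V'') hlh2
    (fun s hs => (hV s (hsubR hs)).mono hsubR)
    (fun s hs => (hV' s (hsubR hs)).mono hsubR)
    (by
      intro s hs
      have hode := hODE s (hsubR hs)
      have hmax : max (V s) 0 = 0 := max_eq_right (hVnonpos s hs)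
      rw [hmax] at hode
      rw [hlamhat₂]
      linarith)
  refine ⟨s₁, ⟨hs₁pos, hs₁ltL⟩, hVs₁, k₁, k₂, p₁, p₂, hk, hp, ?_⟩
  have h1 := hk' s₁ (right_mem_Icc.2 hs₁pos.le)
  have h2 := hp' s₁ (left_mem_Icc.2 hs₁L)
  rw [← h1, ← h2]
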